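/- arXiv:2109.02286 — 2 statements merged into one kernel-verified Lean document; each statement's English description precedes it below -/
import Mathlib

section
/- Let p : ℝ → ℝ² be twice continuously differentiable and let θ ∈ ℝ with p'(θ) ≠ 0. Then lim_{η→θ, η≠θ} [ p'(θ) · (p(η) − p(θ)) ] · sin(η − θ) / |p(η) − p(θ)|² = 1. (In particular, with n(θ)⊥ = p'(θ), the kernel H̃₁(θ,η) = (1/π) n(θ)⊥·(p(η)−p(θ)) sin(η−θ)/|p(θ)−p(η)|² extends continuously to the diagonal with value H̃₁(θ,θ) = 1/π.) -/
open scoped RealInnerProductSpace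

/-- For a `C²` plane curve `p` with `p'(θ) ≠ 0`,
`[p'(θ)·(p(η)−p(θ))]·sin(η−θ)/|p(η)−p(θ)|² → 1` as `η → θ`, `η ≠ θ`. -/
theorem tangential_kernel_diagonal_limit
    (p : ℝ → EuclideanSpace ℝ (Fin 2)) (hp : ContDiff ℝ 2 p)
    (θ : ℝ) (hθ : deriv p θ ≠ 0) :
    Filter.Tendsto
      (fun η => ⟪deriv p θ, p η - p θ⟫ * Real.sin (η - θ) / ‖p η - p θ‖ ^ 2)
      (nhdsWithin θ {θ}ᶜ) (nhds 1) := by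
  set v := deriv p θ with hv
  have hd : HasDerivAt p v θ :=
    ((hp.differentiable (by norm_num)) θ).hasDerivAt
  have hq : Filter.Tendsto (slope p θ) (nhdsWithin θ {θ}ᶜ) (nhds v) :=
    hasDerivAt_iff_tendsto_slope.mp hd
  -- sub map into punctured neighborhood of 0
  have hsub : Filter.Tendsto (fun η => η - θ) (nhdsWithin θ {θ}ᶜ)
      (nhdsWithin 0 {(0:ℝ)}ᶜ) := by
    rw [tendsto_nhdsWithin_iff]
    constructor
    · have : Filter.Tendsto (fun η => η - θ) (nhds θ) (nhds (θ - θ)) :=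
        (continuous_id.sub continuous_const).tendsto θ
      simpa using this.mono_left nhdsWithin_le_nhds
    · filter_upwards [self_mem_nhdsWithin] with x hx
      simpa [sub_eq_zero] using hx
  have hsin0 : Filter.Tendsto (fun t : ℝ => Real.sin t / t)
      (nhdsWithin 0 {(0:ℝ)}ᶜ) (nhds 1) := by
    have h0 : HasDerivAt Real.sin 1 0 := by simpa using Real.hasDerivAt_sin 0
    have := hasDerivAt_iff_tendsto_slope.mp h0
    refine this.congr (fun t => ?_)
    simp [slope_def_field, div_eq_inv_mul, mul_comm]
  have hsin : Filter.Tendsto (fun η => Real.sin (η - θ) / (η - θ))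
      (nhdsWithin θ {θ}ᶜ) (nhds 1) := hsin0.comp hsub
  have hinner : Filter.Tendsto (fun η => ⟪v, slope p θ η⟫)
      (nhdsWithin θ {θ}ᶜ) (nhds (‖v‖ ^ 2)) := by
    have : Filter.Tendsto (fun η => ⟪v, slope p θ η⟫)
        (nhdsWithin θ {θ}ᶜ) (nhds ⟪v, v⟫) :=
      ((continuous_const.inner continuous_id).tendsto v).comp hq
    rw [← real_inner_self_eq_norm_sq]; exact this
  have hnorm : Filter.Tendsto (fun η => ‖slope p θ η‖ ^ 2)
      (nhdsWithin θ {θ}ᶜ) (nhds (‖v‖ ^ 2)) :=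
    ((continuous_norm.pow 2).tendsto v).comp hq
  have hvne : ‖v‖ ^ 2 ≠ 0 := pow_ne_zero _ (norm_ne_zero_iff.mpr hθ)
  have hlim : Filter.Tendsto
      (fun η => ⟪v, slope p θ η⟫ * (Real.sin (η - θ) / (η - θ)) / ‖slope p θ η‖ ^ 2)
      (nhdsWithin θ {θ}ᶜ) (nhds 1) := by
    have := (hinner.mul hsin).div hnorm hvne
    simpa [hvne, Pi.div_def] using this
  refine hlim.congr' ?_
  filter_upwards [self_mem_nhdsWithin] with η hη
  have ht : η - θ ≠ 0 := sub_ne_zero.mpr (by simpa using hη)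
  have hslope : slope p θ η = (η - θ)⁻¹ • (p η - p θ) := by
    simp [slope_def_module]
  rw [hslope]
  rw [inner_smul_right, norm_smul]
  rcases eq_or_ne ‖p η - p θ‖ 0 with h0 | h0
  · simp [h0]
  · simp only [Real.norm_eq_abs, abs_inv, mul_pow, inv_pow, sq_abs]
    field_simp
end

section
/- Let p = (p₁, p₂) : ℝ → ℝ² be twice continuously differentiable and let θ ∈ ℝ with p'(θ) ≠ 0. Let n(θ) = (p₂'(θ), −p₁'(θ)). Then lim_{η→θ, η≠θ} n(θ) · (p(η) − p(θ)) / |p(η) − p(θ)|² = n(θ) · p''(θ) / (2 |p'(θ)|²). -/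
open scoped RealInnerProductSpace

/-- For a `C²` plane curve `p` with `p'(θ) ≠ 0` and normal vector
`n(θ) = (p₂'(θ), −p₁'(θ))`,
`n(θ)·(p(η)−p(θ))/|p(η)−p(θ)|² → n(θ)·p''(θ)/(2|p'(θ)|²)` as `η → θ`, `η ≠ θ`. -/
theorem normal_kernel_diagonal_limit
    (p : ℝ → EuclideanSpace ℝ (Fin 2)) (hp : ContDiff ℝ 2 p)
    (θ : ℝ) (hθ : deriv p θ ≠ 0)
    (n : EuclideanSpace ℝ (Fin 2))
    (hn : n = ![deriv p θ 1, -(deriv p θ 0)]) :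
    Filter.Tendsto
      (fun η => ⟪n, p η - p θ⟫ / ‖p η - p θ‖ ^ 2)
      (nhdsWithin θ {θ}ᶜ)
      (nhds (⟪n, deriv (deriv p) θ⟫ / (2 * ‖deriv p θ‖ ^ 2))) := by
  have hp1 : ContDiff ℝ 1 p := hp.of_le (by norm_num)
  have hpd : Differentiable ℝ p := hp1.differentiable one_ne_zero
  have hdp : ∀ η, HasDerivAt p (deriv p η) η := fun η => (hpd η).hasDerivAt
  have hcd1 : ContDiff ℝ 1 (deriv p) := by
    have := (contDiff_succ_iff_deriv (n := 1)).mp (by exact_mod_cast hp)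
    exact this.2.2
  have hdpd : Differentiable ℝ (deriv p) := hcd1.differentiable one_ne_zero
  have hdd : HasDerivAt (deriv p) (deriv (deriv p) θ) θ := (hdpd θ).hasDerivAt
  have hcont : Continuous (deriv p) := hcd1.continuous
  -- key orthogonality
  have h0 : ⟪n, deriv p θ⟫ = 0 := by
    simp [hn, PiLp.inner_apply, Fin.sum_univ_two, RCLike.inner_apply]
    ring
  set L := nhdsWithin θ ({θ}ᶜ : Set ℝ) with hL
  -- h1 : slope of η ↦ ⟪n, p'(η)⟫
  have hF : HasDerivAt (fun η => ⟪n, deriv p η⟫) ⟪n, deriv (deriv p) θ⟫ θ := by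
    have := (hasDerivAt_const θ n).inner ℝ hdd
    simpa using this
  have h1 : Filter.Tendsto (fun η => ⟪n, deriv p η⟫ / (η - θ)) L
      (nhds ⟪n, deriv (deriv p) θ⟫) := by
    have := hasDerivAt_iff_tendsto_slope.mp hF
    refine this.congr (fun η => ?_)
    simp only [slope_def_field, h0, sub_zero]
  -- slope of p tends to deriv p θ
  have hslope : Filter.Tendsto (slope p θ) L (nhds (deriv p θ)) :=
    hasDerivAt_iff_tendsto_slope.mp (hdp θ)
  have hcontL : Filter.Tendsto (deriv p) L (nhds (deriv p θ)) :=
    (hcont.tendsto θ).mono_left nhdsWithin_le_nhds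
  have h2 : Filter.Tendsto (fun η => ⟪p η - p θ, deriv p η⟫ / (η - θ)) L
      (nhds (‖deriv p θ‖ ^ 2)) := by
    have ht : Filter.Tendsto (fun η => ⟪slope p θ η, deriv p η⟫) L
        (nhds ⟪deriv p θ, deriv p θ⟫) := hslope.inner hcontL
    rw [real_inner_self_eq_norm_sq] at ht
    refine ht.congr' ?_
    filter_upwards [self_mem_nhdsWithin] with η hη
    have hne : η - θ ≠ 0 := sub_ne_zero.mpr hη
    rw [slope_def_module, real_inner_smul_left]
    field_simp
  -- nonvanishing of g'
  have hvne : ‖deriv p θ‖ ^ 2 ≠ 0 := pow_ne_zero 2 (norm_ne_zero_iff.mpr hθ)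
  have hg'ne : ∀ᶠ η in L, 2 * ⟪p η - p θ, deriv p η⟫ ≠ 0 := by
    filter_upwards [h2.eventually_ne hvne, self_mem_nhdsWithin] with η h hη
    intro hz
    apply h
    rw [div_eq_zero_iff]
    left
    linarith [mul_eq_zero.mp hz]
  -- derivatives
  have hff' : ∀ᶠ η in L, HasDerivAt (fun x => ⟪n, p x - p θ⟫) ⟪n, deriv p η⟫ η := by
    filter_upwards with η
    have := (hasDerivAt_const η n).inner ℝ ((hdp η).sub_const (p θ))
    simpa using this
  have hgg' : ∀ᶠ η in L, HasDerivAt (fun x => ⟪p x - p θ, p x - p θ⟫)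
      (2 * ⟪p η - p θ, deriv p η⟫) η := by
    filter_upwards with η
    have := ((hdp η).sub_const (p θ)).inner ℝ ((hdp η).sub_const (p θ))
    have h' : ⟪p η - p θ, deriv p η⟫ + ⟪deriv p η, p η - p θ⟫
        = 2 * ⟪p η - p θ, deriv p η⟫ := by
      rw [real_inner_comm (deriv p η)]; ring
    rw [h'] at this
    exact this
  -- limits at θ
  have hf0 : Filter.Tendsto (fun η => ⟪n, p η - p θ⟫) L (nhds 0) := by
    have : Continuous (fun η => ⟪n, p η - p θ⟫) :=
      continuous_const.inner ((hpd.continuous).sub continuous_const)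
    have := (this.tendsto θ).mono_left (nhdsWithin_le_nhds (s := ({θ}ᶜ : Set ℝ)))
    simpa using this
  have hg0 : Filter.Tendsto (fun η => ⟪p η - p θ, p η - p θ⟫) L (nhds 0) := by
    have hc : Continuous (fun η => p η - p θ) := hpd.continuous.sub continuous_const
    have : Continuous (fun η => ⟪p η - p θ, p η - p θ⟫) := hc.inner hc
    have := (this.tendsto θ).mono_left (nhdsWithin_le_nhds (s := ({θ}ᶜ : Set ℝ)))
    simpa using this
  -- f'/g' limit
  have hdiv : Filter.Tendsto
      (fun η => ⟪n, deriv p η⟫ / (2 * ⟪p η - p θ, deriv p η⟫)) L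
      (nhds (⟪n, deriv (deriv p) θ⟫ / (2 * ‖deriv p θ‖ ^ 2))) := by
    have h2' : Filter.Tendsto (fun η => 2 * (⟪p η - p θ, deriv p η⟫ / (η - θ))) L
        (nhds (2 * ‖deriv p θ‖ ^ 2)) := h2.const_mul 2
    have := h1.div h2' (by positivity)
    refine this.congr' ?_
    filter_upwards [self_mem_nhdsWithin] with η hη
    have hne : η - θ ≠ 0 := sub_ne_zero.mpr hη
    show (⟪n, deriv p η⟫ / (η - θ)) / (2 * (⟪p η - p θ, deriv p η⟫ / (η - θ))) = _
    rcases eq_or_ne (⟪p η - p θ, deriv p η⟫ : ℝ) 0 with hb | hb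
    · rw [hb]; norm_num
    · field_simp
  have key : Filter.Tendsto
      (fun η => ⟪n, p η - p θ⟫ / ⟪p η - p θ, p η - p θ⟫) L
      (nhds (⟪n, deriv (deriv p) θ⟫ / (2 * ‖deriv p θ‖ ^ 2))) :=
    HasDerivAt.lhopital_zero_nhdsNE hff' hgg' hg'ne hf0 hg0 hdiv
  refine key.congr (fun η => ?_)
  rw [real_inner_self_eq_norm_sq]
end
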